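/- Let G be a finite connected P6-free graph, v a vertex of G, D an efficient dominating set of G with v ∈ D, b* ∈ N_2(v), and q* ∈ D ∩ N_3(v) the unique vertex of D adjacent to b* (i.e., D ∩ N[b*] = {q*}). Let Q_1 be the connected component of the induced subgraph G[N_3(v) ∪ N_4(v)] containing q*, and set Z = N[q*] ∩ Q_1, W = (N(b*) ∩ Q_1) \ Z, and Y = Q_1 \ (Z ∪ W). Then every connected component K of the induced subgraph G[Y] satisfies |K ∩ D| = 1, and the unique vertex of K ∩ D is universal for K, i.e., adjacent to every other vertex of K. -/

import Mathlib

open SimpleGraph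

/-- The `i`-th distance level of a vertex `v`: the set of vertices at distance exactly `i`
from `v` in `G`. -/
def distLevel {V : Type*} (G : SimpleGraph V) (v : V) (i : ℕ) : Set V :=
  {u : V | G.dist v u = i}

/-- A graph is `P₆`-free if it contains no induced subgraph isomorphic to the chordless
path on 6 vertices. -/
def P6Free {V : Type*} (G : SimpleGraph V) : Prop :=
  ¬ ∃ f : Fin 6 ↪ V, ∀ i j : Fin 6,
      G.Adj (f i) (f j) ↔ ((i : ℕ) + 1 = (j : ℕ) ∨ (j : ℕ) + 1 = (i : ℕ))

/-- `D` is an efficient dominating set of `G`: every vertex is dominated by exactly one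
vertex of `D` (a vertex dominates itself and its neighbors). -/
def IsEDS {V : Type*} (G : SimpleGraph V) (D : Set V) : Prop :=
  ∀ u : V, ∃! d : V, d ∈ D ∧ (d = u ∨ G.Adj d u)

/-- `Q` is (the vertex set of) a connected component of the subgraph of `G` induced by `S`:
`Q` is a nonempty subset of `S`, `Q` induces a connected graph, and `Q` is closed under
adjacency within `S`. -/
def IsCompOf {V : Type*} (G : SimpleGraph V) (S Q : Set V) : Prop :=
  Q ⊆ S ∧ Q.Nonempty ∧ (G.induce Q).Connected ∧
    ∀ x ∈ Q, ∀ y ∈ S, G.Adj x y → y ∈ Q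

section aux
variable {V : Type*} {G : SimpleGraph V}

/-- Propagation of a property along walks in an induced subgraph. -/
lemma walk_prop {Q : Set V} (P : V → Prop)
    (hcl : ∀ x y : Q, (G.induce Q).Adj x y → P x → P y) :
    ∀ {x y : Q}, (G.induce Q).Walk x y → P x → P y := by
  intro x y w
  induction w with
  | nil => exact id
  | cons h p ih => exact fun hx => ih (hcl _ _ h hx)

lemma dist_succ_of_adj (hconn : G.Connected) {v x y : V} (h : G.Adj x y) :
    G.dist v y ≤ G.dist v x + 1 := by
  have := hconn.dist_triangle (u := v) (v := x) (w := y)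
  rwa [dist_eq_one_iff_adj.mpr h] at this

lemma not_adj_of_dist_gap (hconn : G.Connected) {v x y : V}
    (h : G.dist v x + 1 < G.dist v y) : ¬ G.Adj x y := by
  intro hadj
  have := dist_succ_of_adj hconn (v := v) hadj
  omega

/-- In a connected `P₆`-free graph, no vertex is at distance 5 from `v`. -/
lemma no_dist_five (hconn : G.Connected) (hP6 : P6Free G) (v u : V) :
    G.dist v u ≠ 5 := by
  intro h5
  obtain ⟨w, hw⟩ := hconn.exists_walk_length_eq_dist v u
  rw [h5] at hw
  have hle : ∀ i : ℕ, i ≤ 5 → G.dist v (w.getVert i) ≤ i := by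
    intro i hi
    induction i with
    | zero => simp
    | succ n ih =>
      have h1 : G.dist v (w.getVert n) ≤ n := ih (by omega)
      have h2 := dist_succ_of_adj hconn (v := v)
        (w.adj_getVert_succ (i := n) (by omega))
      omega
  have hge : ∀ k : ℕ, k ≤ 5 → G.dist (w.getVert (5 - k)) u ≤ k := by
    intro k hk
    induction k with
    | zero =>
      have h5' : w.getVert (5 - 0) = u := by
        rw [show 5 - 0 = w.length from by omega]
        exact w.getVert_length
      simp [h5']
    | succ n ih =>
      have h1 := ih (by omega)
      have hadj : G.Adj (w.getVert (5 - (n + 1))) (w.getVert (5 - (n + 1) + 1)) :=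
        w.adj_getVert_succ (by omega)
      rw [show 5 - (n + 1) + 1 = 5 - n from by omega] at hadj
      have h2 := hconn.dist_triangle (u := w.getVert (5 - (n + 1)))
        (v := w.getVert (5 - n)) (w := u)
      rw [dist_eq_one_iff_adj.mpr hadj] at h2
      omega
  have hdist : ∀ i : ℕ, i ≤ 5 → G.dist v (w.getVert i) = i := by
    intro i hi
    have h1 := hle i hi
    have h2 := hge (5 - i) (by omega)
    rw [show 5 - (5 - i) = i from by omega] at h2
    have h3 := hconn.dist_triangle (u := v) (v := w.getVert i) (w := u)
    omega
  apply hP6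
  refine ⟨⟨fun i => w.getVert i, ?_⟩, ?_⟩
  · intro i j hij
    have hi := hdist i (by omega)
    have hj := hdist j (by omega)
    simp only at hij
    rw [hij] at hi
    rw [hi] at hj
    exact Fin.ext (by omega)
  · intro i j
    show G.Adj (w.getVert i) (w.getVert j) ↔ _
    constructor
    · intro hadj
      have hi := hdist i (by omega)
      have hj := hdist j (by omega)
      have h1 := dist_succ_of_adj hconn (v := v) hadj
      have h2 := dist_succ_of_adj hconn (v := v) hadj.symm
      have hne : (i : ℕ) ≠ (j : ℕ) := by
        intro hh
        exact hadj.ne (by rw [Fin.ext (a := i) (b := j) hh])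
      omega
    · intro hij
      rcases hij with hij | hij
      · have := w.adj_getVert_succ (i := (i : ℕ)) (by omega)
        rwa [show (i : ℕ) + 1 = (j : ℕ) from hij] at this
      · have := w.adj_getVert_succ (i := (j : ℕ)) (by omega)
        rw [show (j : ℕ) + 1 = (i : ℕ) from hij] at this
        exact this.symm

set_option maxHeartbeats 1000000 in
/-- Build an induced `P₆` from explicit data. -/
lemma mk_P6 (x0 x1 x2 x3 x4 x5 : V)
    (a01 : G.Adj x0 x1) (a12 : G.Adj x1 x2) (a23 : G.Adj x2 x3)
    (a34 : G.Adj x3 x4) (a45 : G.Adj x4 x5)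
    (n02 : ¬ G.Adj x0 x2) (n03 : ¬ G.Adj x0 x3) (n04 : ¬ G.Adj x0 x4)
    (n05 : ¬ G.Adj x0 x5) (n13 : ¬ G.Adj x1 x3) (n14 : ¬ G.Adj x1 x4)
    (n15 : ¬ G.Adj x1 x5) (n24 : ¬ G.Adj x2 x4) (n25 : ¬ G.Adj x2 x5)
    (n35 : ¬ G.Adj x3 x5)
    (d02 : x0 ≠ x2) (d03 : x0 ≠ x3) (d04 : x0 ≠ x4) (d05 : x0 ≠ x5)
    (d13 : x1 ≠ x3) (d14 : x1 ≠ x4) (d15 : x1 ≠ x5) (d24 : x2 ≠ x4)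
    (d25 : x2 ≠ x5) (d35 : x3 ≠ x5) :
    ∃ f : Fin 6 ↪ V, ∀ i j : Fin 6,
      G.Adj (f i) (f j) ↔ ((i : ℕ) + 1 = (j : ℕ) ∨ (j : ℕ) + 1 = (i : ℕ)) := by
  refine ⟨⟨![x0, x1, x2, x3, x4, x5], ?_⟩, ?_⟩
  · rintro ⟨i, hi⟩ ⟨j, hj⟩ hij
    interval_cases i <;> interval_cases j <;>
      first
        | rfl
        | exact absurd hij (a01.ne) | exact absurd hij (a12.ne)
        | exact absurd hij (a23.ne) | exact absurd hij (a34.ne)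
        | exact absurd hij (a45.ne)
        | exact absurd hij.symm (a01.ne) | exact absurd hij.symm (a12.ne)
        | exact absurd hij.symm (a23.ne) | exact absurd hij.symm (a34.ne)
        | exact absurd hij.symm (a45.ne)
        | exact absurd hij d02 | exact absurd hij d03 | exact absurd hij d04
        | exact absurd hij d05 | exact absurd hij d13 | exact absurd hij d14
        | exact absurd hij d15 | exact absurd hij d24 | exact absurd hij d25
        | exact absurd hij d35
        | exact absurd hij.symm d02 | exact absurd hij.symm d03
        | exact absurd hij.symm d04 | exact absurd hij.symm d05
        | exact absurd hij.symm d13 | exact absurd hij.symm d14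
        | exact absurd hij.symm d15 | exact absurd hij.symm d24
        | exact absurd hij.symm d25 | exact absurd hij.symm d35
  · rintro ⟨i, hi⟩ ⟨j, hj⟩
    show _ ↔ (i + 1 = j ∨ j + 1 = i)
    interval_cases i <;> interval_cases j <;>
      first
        | exact iff_of_true a01 (by decide) | exact iff_of_true a12 (by decide)
        | exact iff_of_true a23 (by decide) | exact iff_of_true a34 (by decide)
        | exact iff_of_true a45 (by decide)
        | exact iff_of_true a01.symm (by decide)
        | exact iff_of_true a12.symm (by decide)
        | exact iff_of_true a23.symm (by decide)
        | exact iff_of_true a34.symm (by decide)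
        | exact iff_of_true a45.symm (by decide)
        | exact iff_of_false G.irrefl (by decide)
        | exact iff_of_false n02 (by decide) | exact iff_of_false n03 (by decide)
        | exact iff_of_false n04 (by decide) | exact iff_of_false n05 (by decide)
        | exact iff_of_false n13 (by decide) | exact iff_of_false n14 (by decide)
        | exact iff_of_false n15 (by decide) | exact iff_of_false n24 (by decide)
        | exact iff_of_false n25 (by decide) | exact iff_of_false n35 (by decide)
        | exact iff_of_false (fun h => n02 h.symm) (by decide)
        | exact iff_of_false (fun h => n03 h.symm) (by decide)
        | exact iff_of_false (fun h => n04 h.symm) (by decide)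
        | exact iff_of_false (fun h => n05 h.symm) (by decide)
        | exact iff_of_false (fun h => n13 h.symm) (by decide)
        | exact iff_of_false (fun h => n14 h.symm) (by decide)
        | exact iff_of_false (fun h => n15 h.symm) (by decide)
        | exact iff_of_false (fun h => n24 h.symm) (by decide)
        | exact iff_of_false (fun h => n25 h.symm) (by decide)
        | exact iff_of_false (fun h => n35 h.symm) (by decide)

end aux

/-- Setup as before. Every connected component `K` of `G[Y]` satisfies `|K ∩ D| = 1`,
and the unique vertex of `K ∩ D` is universal for `K`. -/
theorem stmt_12 {V : Type*} [Fintype V] (G : SimpleGraph V) (hconn : G.Connected)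
    (hP6 : P6Free G) (D : Set V) (hD : IsEDS G D) (v : V) (hv : v ∈ D)
    (bstar : V) (hb : bstar ∈ distLevel G v 2)
    (qstar : V) (hq : qstar ∈ D ∩ distLevel G v 3)
    (huniq : D ∩ insert bstar (G.neighborSet bstar) = {qstar})
    (Q₁ : Set V) (hQ₁ : IsCompOf G (distLevel G v 3 ∪ distLevel G v 4) Q₁)
    (hqQ : qstar ∈ Q₁)
    (Z W Y : Set V)
    (hZ : Z = insert qstar (G.neighborSet qstar) ∩ Q₁)
    (hW : W = (G.neighborSet bstar ∩ Q₁) \ Z)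
    (hY : Y = Q₁ \ (Z ∪ W)) :
    ∀ K : Set V, IsCompOf G Y K →
      ∃ q : V, K ∩ D = {q} ∧ ∀ y ∈ K, y ≠ q → G.Adj q y := by
  intro K hK
  obtain ⟨hKY, ⟨k₀, hk₀⟩, hKconn, hKcl⟩ := hK
  obtain ⟨hQS, hQne, hQconn, hQcl⟩ := hQ₁
  obtain ⟨hqD, hq3⟩ := hq
  simp only [distLevel, Set.mem_setOf_eq] at hb hq3
  have hvv : G.dist v v = 0 := by simp
  -- basic facts
  have hYQ : Y ⊆ Q₁ := by rw [hY]; exact Set.diff_subset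
  have hKQ : K ⊆ Q₁ := hKY.trans hYQ
  have hdistQ : ∀ x ∈ Q₁, 3 ≤ G.dist v x ∧ G.dist v x ≤ 4 := by
    intro x hx
    rcases hQS hx with h | h <;> simp only [distLevel, Set.mem_setOf_eq] at h <;> omega
  -- a : middle vertex of a geodesic v - a - bstar
  obtain ⟨w, hw⟩ := hconn.exists_walk_length_eq_dist v bstar
  rw [hb] at hw
  set a := w.getVert 1 with ha
  have hva : G.Adj v a := by
    have := w.adj_getVert_succ (i := 0) (by omega)
    simpa using this
  have hab : G.Adj a bstar := by
    have := w.adj_getVert_succ (i := 1) (by omega)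
    rw [show (1 : ℕ) + 1 = w.length from by omega, w.getVert_length] at this
    exact this
  have hda : G.dist v a = 1 := dist_eq_one_iff_adj.mpr hva
  -- qstar is adjacent to bstar
  have hqb : G.Adj bstar qstar := by
    have : qstar ∈ D ∩ insert bstar (G.neighborSet bstar) := by rw [huniq]; rfl
    rcases this.2 with h | h
    · exfalso; rw [h] at hq3; omega
    · exact h
  -- no D vertices in N₂
  have hDN2 : ∀ d ∈ D, G.dist v d ≠ 2 := by
    intro d hdD hd2
    obtain ⟨w', hw'⟩ := hconn.exists_walk_length_eq_dist v d
    rw [hd2] at hw'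
    have hva' : G.Adj v (w'.getVert 1) := by
      have := w'.adj_getVert_succ (i := 0) (by omega); simpa using this
    have hda' : G.Adj (w'.getVert 1) d := by
      have := w'.adj_getVert_succ (i := 1) (by omega)
      rw [show (1 : ℕ) + 1 = w'.length from by omega, w'.getVert_length] at this
      exact this
    obtain ⟨e, _, he⟩ := hD (w'.getVert 1)
    have h1 : v = e := he v ⟨hv, Or.inr hva'⟩
    have h2 : d = e := he d ⟨hdD, Or.inr hda'.symm⟩
    rw [← h1] at h2
    have : G.dist v d = 0 := by rw [h2]; simp
    omega
  have hqZ : qstar ∈ Z := by rw [hZ]; exact ⟨Set.mem_insert _ _, hqQ⟩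
  have hYnb : ∀ y ∈ Y, ¬ G.Adj bstar y := by
    intro y hy hadj
    rw [hY] at hy
    rcases Classical.em (y ∈ Z) with h | h
    · exact hy.2 (Or.inl h)
    · exact hy.2 (Or.inr (by rw [hW]; exact ⟨⟨hadj, hy.1⟩, h⟩))
  have hYnq : ∀ y ∈ Y, y ≠ qstar ∧ ¬ G.Adj qstar y := by
    intro y hy
    rw [hY] at hy
    constructor
    · intro h; exact hy.2 (Or.inl (by rw [h]; exact hqZ))
    · intro hadj
      exact hy.2 (Or.inl (by rw [hZ]; exact ⟨Set.mem_insert_of_mem _ hadj, hy.1⟩))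
  -- every vertex of K has its dominator in K
  have hdomK : ∀ y ∈ K, ∃ d ∈ K ∩ D, (d = y ∨ G.Adj d y) := by
    intro y hyK
    obtain ⟨d, ⟨hdD, hdy⟩, hdu⟩ := hD y
    have hyY : y ∈ Y := hKY hyK
    have hyQ : y ∈ Q₁ := hYQ hyY
    have hyd := hdistQ y hyQ
    have hddist : 3 ≤ G.dist v d ∧ G.dist v d ≤ 4 := by
      rcases hdy with rfl | hadj
      · exact hyd
      · have h1 := dist_succ_of_adj hconn (v := v) hadj
        have h2 := dist_succ_of_adj hconn (v := v) hadj.symm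
        have h3 := hDN2 d hdD
        have h5 := no_dist_five hconn hP6 v d
        omega
    have hdS : d ∈ distLevel G v 3 ∪ distLevel G v 4 := by
      simp only [distLevel, Set.mem_union, Set.mem_setOf_eq]
      omega
    have hdQ : d ∈ Q₁ := by
      rcases hdy with rfl | hadj
      · exact hyQ
      · exact hQcl y hyQ d hdS hadj.symm
    have hdZ : d ∉ Z := by
      intro hdZ
      rw [hZ] at hdZ
      have hdq : d = qstar := by
        rcases hdZ.1 with h | h
        · exact h
        · obtain ⟨e, _, he⟩ := hD qstar
          have h1 : qstar = e := he qstar ⟨hqD, Or.inl rfl⟩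
          have h2 : d = e := he d ⟨hdD, Or.inr h.symm⟩
          rw [← h1] at h2; exact h2
      subst hdq
      rcases hdy with rfl | hadj
      · exact (hYnq d hyY).1 rfl
      · exact (hYnq y hyY).2 hadj
    have hdW : d ∉ W := by
      intro hdW
      rw [hW] at hdW
      have hmem : d ∈ D ∩ insert bstar (G.neighborSet bstar) :=
        ⟨hdD, Set.mem_insert_of_mem _ hdW.1.1⟩
      rw [huniq] at hmem
      have : d = qstar := hmem
      rw [this] at hdW
      exact hdW.2 hqZ
    have hdY : d ∈ Y := by
      rw [hY]
      exact ⟨hdQ, fun h => by rcases h with h | h; exact hdZ h; exact hdW h⟩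
    have hdK : d ∈ K := by
      rcases hdy with rfl | hadj
      · exact hyK
      · exact hKcl y hyK d hdY hadj.symm
    exact ⟨d, ⟨hdK, hdD⟩, hdy⟩
  -- find attachment t of K in Q₁ \ Y, adjacent to bstar
  have hattach : ∃ t, ∃ k₁ ∈ K, G.Adj t k₁ ∧ t ∈ Q₁ ∧ t ∉ Y ∧ G.Adj bstar t := by
    have h1 : ∃ t, ∃ k₁ ∈ K, G.Adj t k₁ ∧ t ∈ Q₁ ∧ t ∉ Y := by
      by_contra hcon
      have hqK : qstar ∈ K := by
        obtain ⟨wq⟩ := hQconn.preconnected ⟨k₀, hKQ hk₀⟩ ⟨qstar, hqQ⟩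
        refine walk_prop (G := G) (Q := Q₁) (fun x => x ∈ K) ?_ wq hk₀
        intro x y hxy hxK
        have hadj : G.Adj (x : V) (y : V) := hxy
        rcases Classical.em ((y : V) ∈ Y) with h | h
        · exact hKcl x hxK y h hadj
        · exact absurd ⟨(y : V), (x : V), hxK, hadj.symm, y.2, h⟩ hcon
      exact (hYnq qstar (hKY hqK)).1 rfl
    obtain ⟨t, k₁, hk₁K, htk, htQ, htY⟩ := h1
    refine ⟨t, k₁, hk₁K, htk, htQ, htY, ?_⟩
    have htZW : t ∈ Z ∪ W := by
      by_contra h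
      exact htY (by rw [hY]; exact ⟨htQ, h⟩)
    by_contra hnbt
    have htW : t ∉ W := by
      intro h; rw [hW] at h; exact hnbt h.1.1
    have htZ : t ∈ Z := htZW.resolve_right htW
    have hk₁Y : k₁ ∈ Y := hKY hk₁K
    have htq : G.Adj qstar t := by
      rw [hZ] at htZ
      rcases htZ.1 with h | h
      · exfalso; subst h; exact (hYnq k₁ hk₁Y).2 htk
      · exact h
    -- P6 : v - a - bstar - qstar - t - k₁
    have hdt := hdistQ t htQ
    have hdk₁ := hdistQ k₁ (hKQ hk₁K)
    exact hP6 (mk_P6 v a bstar qstar t k₁ hva hab hqb htq htk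
      (not_adj_of_dist_gap hconn (v := v) (by omega))
      (not_adj_of_dist_gap hconn (v := v) (by omega))
      (not_adj_of_dist_gap hconn (v := v) (by omega))
      (not_adj_of_dist_gap hconn (v := v) (by omega))
      (not_adj_of_dist_gap hconn (v := v) (by omega))
      (not_adj_of_dist_gap hconn (v := v) (by omega))
      (not_adj_of_dist_gap hconn (v := v) (by omega))
      hnbt
      (hYnb k₁ hk₁Y)
      ((hYnq k₁ hk₁Y).2)
      (fun h => by rw [← h] at hb; omega)
      (fun h => by rw [← h] at hq3; omega)
      (fun h => by rw [← h] at hdt; omega)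
      (fun h => by rw [← h] at hdk₁; omega)
      (fun h => by rw [← h] at hq3; omega)
      (fun h => by rw [← h] at hdt; omega)
      (fun h => by rw [← h] at hdk₁; omega)
      (fun h => by rw [← h] at hdt; omega)
      (fun h => by rw [← h] at hdk₁; omega)
      (fun h => (hYnq k₁ hk₁Y).1 h.symm))
  obtain ⟨t, k₁, hk₁K, htk, htQ, htY, hbt⟩ := hattach
  have hdt := hdistQ t htQ
  -- every vertex of K is adjacent to t
  have hKt : ∀ k ∈ K, G.Adj t k := by
    intro k hkK
    obtain ⟨wk⟩ := hKconn.preconnected ⟨k₁, hk₁K⟩ ⟨k, hkK⟩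
    refine walk_prop (G := G) (Q := K) (fun x => G.Adj t x) ?_ wk htk
    intro x y hxy hxadj
    have hadj : G.Adj (x : V) (y : V) := hxy
    by_contra hty
    -- P6 : v - a - bstar - t - x - y
    have hdx := hdistQ (x : V) (hKQ x.2)
    have hdy := hdistQ (y : V) (hKQ y.2)
    exact hP6 (mk_P6 v a bstar t (x : V) (y : V) hva hab hbt hxadj hadj
      (not_adj_of_dist_gap hconn (v := v) (by omega))
      (not_adj_of_dist_gap hconn (v := v) (by omega))
      (not_adj_of_dist_gap hconn (v := v) (by omega))
      (not_adj_of_dist_gap hconn (v := v) (by omega))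
      (not_adj_of_dist_gap hconn (v := v) (by omega))
      (not_adj_of_dist_gap hconn (v := v) (by omega))
      (not_adj_of_dist_gap hconn (v := v) (by omega))
      (hYnb (x : V) (hKY x.2))
      (hYnb (y : V) (hKY y.2))
      hty
      (fun h => by rw [← h] at hb; omega)
      (fun h => by rw [← h] at hdt; omega)
      (fun h => by rw [← h] at hdx; omega)
      (fun h => by rw [← h] at hdy; omega)
      (fun h => by rw [← h] at hdt; omega)
      (fun h => by rw [← h] at hdx; omega)
      (fun h => by rw [← h] at hdy; omega)
      (fun h => by rw [← h] at hdx; omega)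
      (fun h => by rw [← h] at hdy; omega)
      (fun h => htY (h ▸ hKY y.2)))
  -- conclusion
  obtain ⟨q, ⟨hqK, hqD'⟩, _⟩ := hdomK k₀ hk₀
  refine ⟨q, ?_, ?_⟩
  · apply Set.eq_singleton_iff_unique_mem.mpr
    refine ⟨⟨hqK, hqD'⟩, ?_⟩
    rintro d ⟨hdK, hdD⟩
    obtain ⟨e, _, he⟩ := hD t
    have h1 : q = e := he q ⟨hqD', Or.inr (hKt q hqK).symm⟩
    have h2 : d = e := he d ⟨hdD, Or.inr (hKt d hdK).symm⟩
    rw [h2, ← h1]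
  · intro y hyK hyq
    obtain ⟨d, ⟨hdK, hdD⟩, hdy⟩ := hdomK y hyK
    have hdq : d = q := by
      obtain ⟨e, _, he⟩ := hD t
      have h1 : q = e := he q ⟨hqD', Or.inr (hKt q hqK).symm⟩
      have h2 : d = e := he d ⟨hdD, Or.inr (hKt d hdK).symm⟩
      rw [h2, ← h1]
    subst hdq
    rcases hdy with rfl | hadj
    · exact absurd rfl hyq
    · exact hadj
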